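/- Let Σ be a finite alphabet with |Σ| = 4, let ℓ, κ, q be natural numbers with q · Φ(ℓ, κ) < 4^ℓ, where Φ(ℓ, κ) = ∑_{j=0}^{κ} C(ℓ, j) · 3^j, let x_1, …, x_q ∈ Σ^ℓ be fixed strings, let X be a uniformly random element of Σ^ℓ, and let U = ⋃_{i=1}^{q} B_κ(x_i). If A is any event on the same probability space satisfying the conditional bound P(A ∩ {X ∉ U}) ≤ P(X ∉ U) · (1/(4^ℓ − q·Φ(ℓ, κ))), then P(A) ≤ (q·Φ(ℓ, κ) + 1)/4^ℓ. -/

import Mathlib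

open Finset MeasureTheory ENNReal


lemma fin4_sub_inj : ∀ a b : Fin 4, a ≠ 0 → b ≠ 0 → a.val % 3 = b.val % 3 → a = b := by decide

lemma ball_card_le (ℓ κ : ℕ) (x : Fin ℓ → Fin 4) :
    (Finset.univ.filter (fun y : Fin ℓ → Fin 4 => hammingDist x y ≤ κ)).card ≤
      ∑ j ∈ Finset.range (κ + 1), Nat.choose ℓ j * 3 ^ j := by
  classical
  set T : Finset (Σ S : Finset (Fin ℓ), ∀ i ∈ S, Fin 3) :=
    ((Finset.univ.powerset.filter (fun S : Finset (Fin ℓ) => S.card ≤ κ)).sigma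
      (fun S => S.pi (fun _ => (Finset.univ : Finset (Fin 3))))) with hT
  have hcard : T.card = ∑ j ∈ Finset.range (κ + 1), Nat.choose ℓ j * 3 ^ j := by
    rw [hT, Finset.card_sigma]
    have h1 : ∀ S : Finset (Fin ℓ), (S.pi (fun _ => (Finset.univ : Finset (Fin 3)))).card
        = 3 ^ S.card := by
      intro S; rw [Finset.card_pi]; simp [Finset.prod_const]
    simp_rw [h1]
    have h2 : (Finset.univ.powerset.filter (fun S : Finset (Fin ℓ) => S.card ≤ κ))
        = (Finset.range (κ + 1)).biUnion (fun j => Finset.powersetCard j Finset.univ) := by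
      ext S
      simp [Finset.mem_powersetCard, Nat.lt_succ_iff]
    rw [h2, Finset.sum_biUnion]
    · refine Finset.sum_congr rfl fun j _ => ?_
      rw [Finset.sum_congr rfl (fun S hS => by
        rw [(Finset.mem_powersetCard.mp hS).2]), Finset.sum_const,
        Finset.card_powersetCard, Finset.card_univ, Fintype.card_fin, smul_eq_mul]
    · intro a ha b hb hab
      simp only [Finset.disjoint_left, Finset.mem_powersetCard]
      rintro S ⟨-, h1⟩ ⟨-, h2⟩
      exact hab (h1.symm.trans h2)
  rw [← hcard]
  apply Finset.card_le_card_of_injOn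
    (fun y => ⟨Finset.univ.filter (fun i => x i ≠ y i),
      fun i _ => ⟨(y i - x i).val % 3, Nat.mod_lt _ (by norm_num)⟩⟩)
  · intro y hy
    simp only [Finset.mem_coe, Finset.mem_filter, Finset.mem_univ, true_and] at hy
    rw [Finset.mem_coe, hT, Finset.mem_sigma]
    constructor
    · simp only [Finset.mem_filter, Finset.mem_powerset]
      exact ⟨Finset.subset_univ _, hy⟩
    · rw [Finset.mem_pi]; intro i _; exact Finset.mem_univ _
  · intro y _ y' _ h
    simp only [Sigma.mk.inj_iff] at h
    obtain ⟨hS, hf⟩ := h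
    funext i
    by_cases hi : i ∈ Finset.univ.filter (fun j => x j ≠ y j)
    · have hi' : i ∈ Finset.univ.filter (fun j => x j ≠ y' j) := hS ▸ hi
      simp only [Finset.mem_filter, Finset.mem_univ, true_and] at hi hi'
      have hf2 : (fun i (_ : i ∈ Finset.univ.filter (fun j => x j ≠ y' j)) =>
          (⟨(y i - x i).val % 3, Nat.mod_lt _ (by norm_num)⟩ : Fin 3)) =
          (fun i (_ : i ∈ Finset.univ.filter (fun j => x j ≠ y' j)) =>
          (⟨(y' i - x i).val % 3, Nat.mod_lt _ (by norm_num)⟩ : Fin 3)) := eq_of_heq (hS ▸ hf)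
      have hv := congrFun (congrFun hf2 i) (by simpa using hi')
      have hvv : (y i - x i).val % 3 = (y' i - x i).val % 3 := congrArg Fin.val hv
      have h1 : y i - x i ≠ 0 := sub_ne_zero_of_ne (Ne.symm hi)
      have h2 : y' i - x i ≠ 0 := sub_ne_zero_of_ne (Ne.symm hi')
      have := fin4_sub_inj _ _ h1 h2 hvv
      exact sub_left_injective this
    · have hi' : i ∉ Finset.univ.filter (fun j => x j ≠ y' j) := hS ▸ hi
      simp only [Finset.mem_filter, Finset.mem_univ, true_and, not_not] at hi hi'
      rw [← hi, ← hi']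

lemma measure_preimage_finset {Ω : Type*} [MeasurableSpace Ω] (μ : Measure Ω)
    (ℓ : ℕ) (X : Ω → Fin ℓ → Fin 4) (hX : Measurable X)
    (hunif : ∀ y : Fin ℓ → Fin 4, μ (X ⁻¹' {y}) = 1 / ((4 ^ ℓ : ℕ) : ℝ≥0∞))
    (S : Finset (Fin ℓ → Fin 4)) :
    μ (X ⁻¹' ↑S) = (S.card : ℝ≥0∞) / ((4 ^ ℓ : ℕ) : ℝ≥0∞) := by
  have h1 : (X ⁻¹' ↑S) = ⋃ y ∈ S, X ⁻¹' {y} := by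
    ext ω; simp
  rw [h1, measure_biUnion_finset]
  · rw [Finset.sum_congr rfl (fun y _ => hunif y), Finset.sum_const, nsmul_eq_mul, mul_one_div]
  · intro a _ b _ hab
    exact Set.disjoint_left.mpr (fun ω h1 h2 => hab (by
      simp only [Set.mem_preimage, Set.mem_singleton_iff] at h1 h2; rw [← h1, ← h2]))
  · exact fun y _ => hX (measurableSet_singleton y)


/-- The probabilistic core of the finite-domain unpredictability bound.
Let `X` be uniformly random over `Fin ℓ → Fin 4`, let `U` be the union of the Hamming
balls of radius `κ` around the fixed strings `x_1, …, x_q`, and suppose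
`q · Φ(ℓ, κ) < 4^ℓ` where `Φ(ℓ, κ) = ∑_{j=0}^{κ} C(ℓ, j) · 3^j`. If an event `A`
satisfies `P(A ∩ {X ∉ U}) ≤ P(X ∉ U) · 1/(4^ℓ − q·Φ(ℓ, κ))`, then
`P(A) ≤ (q·Φ(ℓ, κ) + 1)/4^ℓ`. -/
theorem prediction_game_success_bound
    {Ω : Type*} [MeasurableSpace Ω] (μ : Measure Ω) [IsProbabilityMeasure μ]
    (ℓ κ q : ℕ)
    (hq : q * (∑ j ∈ Finset.range (κ + 1), Nat.choose ℓ j * 3 ^ j) < 4 ^ ℓ)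
    (x : Fin q → Fin ℓ → Fin 4)
    (X : Ω → Fin ℓ → Fin 4) (hX : Measurable X)
    (hunif : ∀ y : Fin ℓ → Fin 4, μ (X ⁻¹' {y}) = 1 / ((4 ^ ℓ : ℕ) : ℝ≥0∞))
    (A : Set Ω) (hA : MeasurableSet A)
    (hcond : μ (A ∩ X ⁻¹' {y | ∃ i : Fin q, hammingDist (x i) y ≤ κ}ᶜ) ≤
        μ (X ⁻¹' {y | ∃ i : Fin q, hammingDist (x i) y ≤ κ}ᶜ) *
          (1 / (((4 ^ ℓ - q * ∑ j ∈ Finset.range (κ + 1),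
            Nat.choose ℓ j * 3 ^ j : ℕ)) : ℝ≥0∞))) :
    μ A ≤ ((q * (∑ j ∈ Finset.range (κ + 1), Nat.choose ℓ j * 3 ^ j) + 1 : ℕ) : ℝ≥0∞) /
        ((4 ^ ℓ : ℕ) : ℝ≥0∞) := by
  classical
  set Φ : ℕ := ∑ j ∈ Finset.range (κ + 1), Nat.choose ℓ j * 3 ^ j with hΦ
  set m : ℕ := q * Φ with hm
  set N : ℕ := 4 ^ ℓ with hN
  set SU : Finset (Fin ℓ → Fin 4) :=
    Finset.univ.filter (fun y => ∃ i : Fin q, hammingDist (x i) y ≤ κ) with hSU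
  set k : ℕ := SU.card with hk
  -- card bound
  have hkm : k ≤ m := by
    have hsub : SU ⊆ (Finset.univ : Finset (Fin q)).biUnion
        (fun i => Finset.univ.filter (fun y => hammingDist (x i) y ≤ κ)) := by
      intro y hy
      simp only [hSU, Finset.mem_filter, Finset.mem_univ, true_and] at hy
      obtain ⟨i, hi⟩ := hy
      exact Finset.mem_biUnion.mpr ⟨i, Finset.mem_univ _, by simp [hi]⟩
    calc k ≤ _ := Finset.card_le_card hsub
      _ ≤ ∑ i : Fin q, (Finset.univ.filter (fun y => hammingDist (x i) y ≤ κ)).card :=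
        Finset.card_biUnion_le
      _ ≤ ∑ _i : Fin q, Φ := Finset.sum_le_sum (fun i _ => ball_card_le ℓ κ (x i))
      _ = m := by simp [hm, mul_comm]
  have hkN : k ≤ N := by
    calc k ≤ Fintype.card (Fin ℓ → Fin 4) := hk ▸ Finset.card_le_univ SU
      _ = N := by simp [hN]
  have hNm : m < N := hq
  -- set identifications
  have hUset : {y : Fin ℓ → Fin 4 | ∃ i : Fin q, hammingDist (x i) y ≤ κ} = ↑SU := by
    ext y; simp [hSU]
  have hUcset : {y : Fin ℓ → Fin 4 | ∃ i : Fin q, hammingDist (x i) y ≤ κ}ᶜ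
      = ↑(SUᶜ) := by
    rw [hUset]; ext y; simp
  have hμU : μ (X ⁻¹' ↑SU) = (k : ℝ≥0∞) / (N : ℝ≥0∞) :=
    measure_preimage_finset μ ℓ X hX hunif SU
  have hcardc : (SUᶜ).card = N - k := by
    rw [Finset.card_compl]
    simp [hk, hN]
  have hμUc : μ (X ⁻¹' ↑(SUᶜ)) = ((N - k : ℕ) : ℝ≥0∞) / (N : ℝ≥0∞) := by
    rw [measure_preimage_finset μ ℓ X hX hunif, hcardc]
  -- split
  have hmeasU : MeasurableSet (X ⁻¹' ↑SU) := by
    have h1 : X ⁻¹' ↑SU = ⋃ y ∈ SU, X ⁻¹' {y} := by ext ω; simp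
    rw [h1]
    exact MeasurableSet.biUnion SU.countable_toSet
      (fun y _ => hX (measurableSet_singleton y))
  have hsplit : μ A = μ (A ∩ X ⁻¹' ↑SU) + μ (A ∩ (X ⁻¹' ↑SU)ᶜ) := by
    rw [← Set.diff_eq, measure_inter_add_diff A hmeasU]
  have hcompl : (X ⁻¹' ↑SU)ᶜ = X ⁻¹' ↑(SUᶜ) := by
    rw [← Set.preimage_compl]
    congr 1
    ext y; simp
  have hbound1 : μ (A ∩ X ⁻¹' ↑SU) ≤ (k : ℝ≥0∞) / (N : ℝ≥0∞) :=
    hμU ▸ measure_mono Set.inter_subset_right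
  have hbound2 : μ (A ∩ (X ⁻¹' ↑SU)ᶜ) ≤
      ((N - k : ℕ) : ℝ≥0∞) / (N : ℝ≥0∞) * (1 / ((N - m : ℕ) : ℝ≥0∞)) := by
    rw [hcompl, ← hμUc]
    have := hcond
    rw [hUcset] at this
    simpa [hm, hN, hΦ] using this
  -- final arithmetic
  set t : ℕ := N - m with ht
  have ht1 : 1 ≤ t := by omega
  have htne : (t : ℝ≥0∞) ≠ 0 := by exact_mod_cast Nat.one_le_iff_ne_zero.mp ht1
  have htop : (t : ℝ≥0∞) ≠ ⊤ := natCast_ne_top t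
  have hNne : (N : ℝ≥0∞) ≠ 0 := by positivity
  have harith : (k : ℝ≥0∞) / N + ((N - k : ℕ) : ℝ≥0∞) / N * (1 / (t : ℝ≥0∞))
      ≤ ((m + 1 : ℕ) : ℝ≥0∞) / (N : ℝ≥0∞) := by
    have e1 : (k : ℝ≥0∞) / N = ((k * t : ℕ) : ℝ≥0∞) / ((N * t : ℕ) : ℝ≥0∞) := by
      push_cast
      rw [ENNReal.mul_div_mul_right _ _ htne htop]
    have e2 : ((N - k : ℕ) : ℝ≥0∞) / N * (1 / (t : ℝ≥0∞))
        = ((N - k : ℕ) : ℝ≥0∞) / ((N * t : ℕ) : ℝ≥0∞) := by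
      push_cast
      rw [div_eq_mul_inv, div_eq_mul_inv, one_mul, mul_assoc, ← ENNReal.mul_inv
        (Or.inl hNne) (Or.inl (natCast_ne_top N)), ← div_eq_mul_inv]
    rw [e1, e2, ENNReal.div_add_div_same]
    have hnat : k * t + (N - k) ≤ (m + 1) * t := by
      zify [hkN, ht, hNm.le]
      nlinarith [hkm, ht1, Nat.sub_add_cancel hNm.le]
    calc (((k * t : ℕ) : ℝ≥0∞) + ((N - k : ℕ) : ℝ≥0∞)) / ((N * t : ℕ) : ℝ≥0∞)
        ≤ (((m + 1) * t : ℕ) : ℝ≥0∞) / ((N * t : ℕ) : ℝ≥0∞) := by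
          apply ENNReal.div_le_div_right
          rw [← Nat.cast_add]
          exact_mod_cast hnat
      _ = ((m + 1 : ℕ) : ℝ≥0∞) / (N : ℝ≥0∞) := by
          push_cast
          rw [ENNReal.mul_div_mul_right _ _ htne htop]
  calc μ A = μ (A ∩ X ⁻¹' ↑SU) + μ (A ∩ (X ⁻¹' ↑SU)ᶜ) := hsplit
    _ ≤ (k : ℝ≥0∞) / N + ((N - k : ℕ) : ℝ≥0∞) / N * (1 / ((t : ℕ) : ℝ≥0∞)) :=
        add_le_add hbound1 hbound2
    _ ≤ ((m + 1 : ℕ) : ℝ≥0∞) / (N : ℝ≥0∞) := harith
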